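/- Let π : A → B be a finite groupoid covering between groupoids with finite automorphism groups. For an object y of B, the degree deg π(y) := |{objects x of A with π(x) = y}| satisfies deg π(y) = Σ_{[x] ∈ π⁻¹([y])} |[x]_y| = Σ_{[x] ∈ π⁻¹([y])} |Aut(y)| / |Aut(x)|, where the sum ranges over isomorphism classes of objects of A mapping to the isomorphism class of y. -/
import Mathlib


open CategoryTheory

/-- A groupoid covering: a functor with unique lifting of morphisms. -/
def IsGroupoidCovering {A B : Type*} [Groupoid A] [Groupoid B] (π : A ⥤ B) : Prop :=
  ∀ (x₁ : A) (y₂ : B) (φ : π.obj x₁ ⟶ y₂),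
    ∃! p : (x₂ : A) × (x₁ ⟶ x₂), ∃ h : π.obj p.1 = y₂, π.map p.2 ≫ eqToHom h = φ

/-- Isomorphism (in `A`) of objects of the fiber of `π` over `y`, as a setoid. -/
def fiberIsoSetoid {A B : Type*} [Groupoid A] [Groupoid B] (π : A ⥤ B) (y : B) :
    Setoid {x : A // π.obj x = y} where
  r a b := Nonempty (a.1 ≅ b.1)
  iseqv := ⟨fun a => ⟨Iso.refl a.1⟩, fun ⟨e⟩ => ⟨e.symm⟩, fun ⟨e⟩ ⟨f⟩ => ⟨e.trans f⟩⟩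

/-- Unique lifting gives a bijection `Σ (x₂ ∈ [x]_y), (x ⟶ x₂) ≃ (y ⟶ y)`. -/
lemma aux_equiv_hom {A B : Type*} [Groupoid A] [Groupoid B] (π : A ⥤ B)
    (hπ : IsGroupoidCovering π) (y : B) (x : A) (hx : π.obj x = y) :
    Nonempty ((Σ x₂ : {x' : A // π.obj x' = y ∧ Nonempty (x' ≅ x)}, (x ⟶ x₂.1)) ≃ (y ⟶ y)) := by
  refine ⟨Equiv.ofBijective
    (fun p => eqToHom hx.symm ≫ π.map p.2 ≫ eqToHom p.1.2.1) ⟨?_, ?_⟩⟩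
  · rintro ⟨⟨x₂, h₂, i₂⟩, ψ⟩ ⟨⟨x₃, h₃, i₃⟩, χ⟩ hF
    simp only at hF
    have h2 : π.map ψ ≫ eqToHom h₂ = π.map χ ≫ eqToHom h₃ := by
      have := congrArg (fun φ => eqToHom hx ≫ φ) hF
      simpa using this
    obtain ⟨p, hp, hu⟩ := hπ x y (π.map ψ ≫ eqToHom h₂)
    have e1 : (⟨x₂, ψ⟩ : (x₂ : A) × (x ⟶ x₂)) = p := hu _ ⟨h₂, rfl⟩
    have e2 : (⟨x₃, χ⟩ : (x₂ : A) × (x ⟶ x₂)) = p := hu _ ⟨h₃, h2.symm⟩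
    have e3 := e1.trans e2.symm
    obtain ⟨hA, hB⟩ := Sigma.mk.inj_iff.mp e3
    subst hA
    refine Sigma.ext (Subtype.ext rfl) ?_
    exact heq_of_eq (eq_of_heq hB)
  · intro φ
    obtain ⟨p, ⟨h, hcomp⟩, _⟩ := hπ x y (eqToHom hx ≫ φ)
    refine ⟨⟨⟨p.1, h, ⟨((Groupoid.isoEquivHom x p.1).symm p.2).symm⟩⟩, p.2⟩, ?_⟩
    simp only
    rw [hcomp]
    simp

/-- `|[x]_y| = |Aut y| / |Aut x|`. -/
lemma aux_card_class {A B : Type*} [Groupoid A] [Groupoid B]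
    [∀ a : A, Finite (a ⟶ a)] [∀ b : B, Finite (b ⟶ b)] (π : A ⥤ B)
    (hπ : IsGroupoidCovering π) (hfin : ∀ y : B, Finite {x : A // π.obj x = y})
    (y : B) (x : A) (hx : π.obj x = y) :
    Nat.card {x' : A // π.obj x' = y ∧ Nonempty (x' ≅ x)} =
      Nat.card (y ⟶ y) / Nat.card (x ⟶ x) := by
  obtain ⟨e⟩ := aux_equiv_hom π hπ y x hx
  have e2 : (Σ x₂ : {x' : A // π.obj x' = y ∧ Nonempty (x' ≅ x)}, (x ⟶ x₂.1)) ≃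
      {x' : A // π.obj x' = y ∧ Nonempty (x' ≅ x)} × (x ⟶ x) :=
    (Equiv.sigmaCongrRight fun x₂ =>
      (Iso.homCongr (Iso.refl x) (Classical.choice x₂.2.2))).trans
      (Equiv.sigmaEquivProd _ _)
  have hcard : Nat.card (y ⟶ y) =
      Nat.card {x' : A // π.obj x' = y ∧ Nonempty (x' ≅ x)} * Nat.card (x ⟶ x) := by
    rw [← Nat.card_congr e, Nat.card_congr e2, Nat.card_prod]
  have hpos : 0 < Nat.card (x ⟶ x) := Nat.card_pos
  rw [hcard, Nat.mul_div_cancel _ hpos]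

/-- For a finite groupoid covering, the degree over `y` (the number of objects in the
fiber over `y`) equals the sum, over the isomorphism classes `[x]` of objects of the
fiber, of `|[x]_y|`, and also the sum of `|Aut y| / |Aut x|`. -/
theorem degree_eq_sum_over_isoClasses {A B : Type*} [Groupoid A] [Groupoid B]
    [∀ a : A, Finite (a ⟶ a)] [∀ b : B, Finite (b ⟶ b)]
    (π : A ⥤ B) (hπ : IsGroupoidCovering π)
    (hfin : ∀ y : B, Finite {x : A // π.obj x = y})
    (y : B)
    (rep : Quotient (fiberIsoSetoid π y) → {x : A // π.obj x = y})
    (hrep : ∀ q, Quotient.mk (fiberIsoSetoid π y) (rep q) = q) :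
    Nat.card {x : A // π.obj x = y} =
      ∑ᶠ q : Quotient (fiberIsoSetoid π y),
        Nat.card {x' : A // π.obj x' = y ∧ Nonempty (x' ≅ (rep q).1)} ∧
    Nat.card {x : A // π.obj x = y} =
      ∑ᶠ q : Quotient (fiberIsoSetoid π y),
        Nat.card (y ⟶ y) / Nat.card ((rep q).1 ⟶ (rep q).1) := by
  classical
  haveI := hfin y
  haveI : Finite (Quotient (fiberIsoSetoid π y)) := Quotient.finite _
  have h1 : Nat.card {x : A // π.obj x = y} =
      ∑ᶠ q : Quotient (fiberIsoSetoid π y),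
        Nat.card {x' : A // π.obj x' = y ∧ Nonempty (x' ≅ (rep q).1)} := by
    have E : {x : A // π.obj x = y} ≃
        Σ q : Quotient (fiberIsoSetoid π y),
          {x' : A // π.obj x' = y ∧ Nonempty (x' ≅ (rep q).1)} := by
      refine ⟨fun a => ⟨Quotient.mk _ a, ⟨a.1, a.2,
        (Quotient.exact (hrep (Quotient.mk _ a))).map Iso.symm⟩⟩,
        fun p => ⟨p.2.1, p.2.2.1⟩, fun a => rfl, ?_⟩
      rintro ⟨q, x', hx', hn⟩
      have hq : Quotient.mk (fiberIsoSetoid π y) ⟨x', hx'⟩ = q := by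
        rw [← hrep q]; exact Quotient.sound hn
      subst hq
      rfl
    haveI : ∀ q : Quotient (fiberIsoSetoid π y),
        Finite {x' : A // π.obj x' = y ∧ Nonempty (x' ≅ (rep q).1)} := fun q =>
      Finite.of_injective (fun a => (⟨a.1, a.2.1⟩ : {x : A // π.obj x = y}))
        (fun a b h => by simpa [Subtype.ext_iff] using h)
    haveI := Fintype.ofFinite (Quotient (fiberIsoSetoid π y))
    haveI : ∀ q : Quotient (fiberIsoSetoid π y),
        Fintype {x' : A // π.obj x' = y ∧ Nonempty (x' ≅ (rep q).1)} := fun q =>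
      Fintype.ofFinite _
    rw [Nat.card_congr E, finsum_eq_sum_of_fintype, Nat.card_eq_fintype_card,
      Fintype.card_sigma]
    exact Finset.sum_congr rfl fun q _ => (Nat.card_eq_fintype_card).symm
  refine ⟨h1, h1.trans ?_⟩
  exact finsum_congr fun q => aux_card_class π hπ hfin y (rep q).1 (rep q).2
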